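/- Let ≼ be an inclusion-monotone preorder on Finset α and let C be a consistency predicate with C ∅. Then for every finite G : Finset α: there exists a nonempty ≼-preferred repair of G if and only if the empty set ∅ is not a ≼-preferred repair of G. -/
import Mathlib


/-- The strict part of a preference relation on finite databases. -/
def strictPart {α : Type*} [DecidableEq α] (r : Finset α → Finset α → Prop)
    (H H' : Finset α) : Prop :=
  r H H' ∧ ¬ r H' H

/-- `H` is a `r`-preferred repair of `G` with respect to consistency predicate `C`. -/
def PreferredRepair {α : Type*} [DecidableEq α] (r : Finset α → Finset α → Prop)
    (C : Finset α → Prop) (G H : Finset α) : Prop :=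
  C H ∧ H ⊆ G ∧ ¬ ∃ H'', H'' ⊆ G ∧ H'' ≠ H ∧ C H'' ∧ strictPart r H H''

/-- `H` is a subset repair of `G`: an inclusion-maximal consistent subset of `G`. -/
def SubsetRepair {α : Type*} [DecidableEq α] (C : Finset α → Prop)
    (G H : Finset α) : Prop :=
  C H ∧ H ⊆ G ∧ ¬ ∃ H'', C H'' ∧ H ⊂ H'' ∧ H'' ⊆ G

/-- A relation on finite sets is inclusion-monotone if strict inclusion implies
strict preference. -/
def InclMonotone {α : Type*} [DecidableEq α] (r : Finset α → Finset α → Prop) : Prop :=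
  ∀ H H' : Finset α, H ⊂ H' → strictPart r H H'

lemma exists_rel_maximal {β : Type*} (rel : β → β → Prop)
    (htr : ∀ a b c, rel a b → rel b c → rel a c)
    (hirr : ∀ a, ¬ rel a a) :
    ∀ (s : Finset β), s.Nonempty → ∃ m ∈ s, ∀ x ∈ s, ¬ rel m x := by
  classical
  intro s
  induction s using Finset.induction_on with
  | empty => intro h; exact absurd h Finset.not_nonempty_empty
  | @insert a s ha ih =>
    intro _
    rcases s.eq_empty_or_nonempty with hs | hs
    · subst hs
      exact ⟨a, Finset.mem_insert_self _ _, by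
        intro x hx
        rw [Finset.mem_insert] at hx
        rcases hx with rfl | hx
        · exact hirr x
        · exact absurd hx (Finset.notMem_empty x)⟩
    · obtain ⟨m, hm, hmax⟩ := ih hs
      by_cases hra : rel m a
      · refine ⟨a, Finset.mem_insert_self _ _, ?_⟩
        intro x hx hax
        rw [Finset.mem_insert] at hx
        rcases hx with rfl | hx
        · exact hirr x hax
        · exact hmax x hx (htr _ _ _ hra hax)
      · refine ⟨m, Finset.mem_insert_of_mem hm, ?_⟩
        intro x hx hmx
        rw [Finset.mem_insert] at hx
        rcases hx with rfl | hx
        · exact hra hmx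
        · exact hmax x hx hmx

theorem nonempty_preferred_repair_iff_empty_not_preferred
    {α : Type*} [DecidableEq α] (r : Finset α → Finset α → Prop)
    (hrefl : ∀ H, r H H)
    (htrans : ∀ H₁ H₂ H₃, r H₁ H₂ → r H₂ H₃ → r H₁ H₃)
    (hmono : InclMonotone r)
    (C : Finset α → Prop) (hC : C ∅) (G : Finset α) :
    (∃ H, PreferredRepair r C G H ∧ H ≠ ∅) ↔ ¬ PreferredRepair r C G ∅ := by
  classical
  have strict_trans : ∀ a b c, strictPart r a b → strictPart r b c → strictPart r a c := by
    rintro a b c ⟨hab, hba⟩ ⟨hbc, hcb⟩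
    exact ⟨htrans _ _ _ hab hbc, fun hca => hba (htrans _ _ _ hbc hca)⟩
  have strict_irr : ∀ a, ¬ strictPart r a a := fun a ⟨h1, h2⟩ => h2 h1
  constructor
  · rintro ⟨H, ⟨hCH, hHG, _⟩, hne⟩ ⟨_, _, hnot⟩
    refine hnot ⟨H, hHG, hne, hCH, hmono ∅ H ?_⟩
    exact Finset.empty_ssubset.mpr (Finset.nonempty_iff_ne_empty.mpr hne)
  · intro hnp
    -- ∅ is consistent and ⊆ G, so there must be a strictly better witness
    have : ∃ H'', H'' ⊆ G ∧ H'' ≠ ∅ ∧ C H'' ∧ strictPart r ∅ H'' := by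
      by_contra h
      exact hnp ⟨hC, Finset.empty_subset G, h⟩
    obtain ⟨H₀, hH₀G, hH₀ne, hCH₀, hs₀⟩ := this
    set S : Finset (Finset α) :=
      G.powerset.filter (fun H => C H ∧ strictPart r ∅ H) with hS
    have hH₀S : H₀ ∈ S := by
      simp only [hS, Finset.mem_filter, Finset.mem_powerset]
      exact ⟨hH₀G, hCH₀, hs₀⟩
    obtain ⟨m, hmS, hmax⟩ := exists_rel_maximal (strictPart r) strict_trans strict_irr S ⟨H₀, hH₀S⟩
    simp only [hS, Finset.mem_filter, Finset.mem_powerset] at hmS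
    obtain ⟨hmG, hCm, hsm⟩ := hmS
    have hmne : m ≠ ∅ := fun h => strict_irr ∅ (h ▸ hsm)
    refine ⟨m, ⟨hCm, hmG, ?_⟩, hmne⟩
    rintro ⟨H'', hH''G, hH''m, hCH'', hsmH''⟩
    apply hmax H''
    · simp only [hS, Finset.mem_filter, Finset.mem_powerset]
      exact ⟨hH''G, hCH'', strict_trans _ _ _ hsm hsmH''⟩
    · exact hsmH''
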